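/- arXiv:2407.16561 — 8 statements merged into one kernel-verified Lean document; each statement's English description precedes it below -/
import Mathlib

section
/- For natural numbers n ≥ 1, k, m with m ≤ n - 1, the generalized binomial coefficient satisfies the addition recursion C(n, k, m) = C(n-1, k, m) + C(n-1, k-1, m), where C(n-1, k-1, m) is interpreted as 0 when k = 0. -/
open Finset

/-- Generalized binomial (Kravchuk) coefficient:
`C(n,k,m) = Σ_{l=0}^{m} (-1)^l * binom(n-m, k-l) * binom(m, l)`,
with the convention that the binomial vanishes for a negative lower index
(encoded by the `if l ≤ k` guard, since we use natural subtraction). -/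
def kravC (n k m : ℕ) : ℤ :=
  ∑ l ∈ Finset.range (m + 1),
    (-1 : ℤ) ^ l * (if l ≤ k then ((n - m).choose (k - l) : ℤ) else 0) * (m.choose l : ℤ)

theorem kravC_add_recursion (n k m : ℕ) (hn : 1 ≤ n) (hm : m ≤ n - 1) :
    kravC n k m = kravC (n - 1) k m + (if k = 0 then 0 else kravC (n - 1) (k - 1) m) := by
  have hnm : n - m = (n - 1 - m) + 1 := by omega
  unfold kravC
  split_ifs with hk
  · subst hk
    rw [add_zero]
    refine Finset.sum_congr rfl fun l _ => ?_
    rcases Nat.eq_zero_or_pos l with h | h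
    · subst h; simp
    · simp [Nat.not_le.mpr h]
  · rw [← Finset.sum_add_distrib]
    refine Finset.sum_congr rfl fun l _ => ?_
    rcases lt_trichotomy l k with h | h | h
    · have h1 : l ≤ k := h.le
      have h2 : l ≤ k - 1 := by omega
      have hkl : k - l = (k - 1 - l) + 1 := by omega
      have hc : (n - m).choose (k - l)
          = (n - 1 - m).choose (k - l) + (n - 1 - m).choose (k - 1 - l) := by
        rw [hnm, hkl, Nat.choose_succ_succ, Nat.succ_eq_add_one, ← hkl, Nat.add_comm]
      rw [if_pos h1, if_pos h1, if_pos h2, hc]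
      push_cast
      ring
    · subst h
      have h2 : ¬ l ≤ l - 1 := by omega
      simp [h2, hnm]
    · have h1 : ¬ l ≤ k := Nat.not_le.mpr h
      have h2 : ¬ l ≤ k - 1 := by omega
      simp [h1, h2]
end

section
/- For natural numbers n ≥ 1, k, and m with 1 ≤ m ≤ n, the generalized binomial coefficient satisfies the subtraction recursion C(n, k, m) = C(n-1, k, m-1) - C(n-1, k-1, m-1), where C(n-1, k-1, m-1) is interpreted as 0 when k = 0. -/
open Finset

theorem kravC_sub_recursion (n k m : ℕ) (hn : 1 ≤ n) (hm1 : 1 ≤ m) (hm : m ≤ n) :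
    kravC n k m = kravC (n - 1) k (m - 1) - (if k = 0 then 0 else kravC (n - 1) (k - 1) (m - 1)) := by
  cases n with
  | zero => omega
  | succ n =>
  cases m with
  | zero => omega
  | succ m =>
  simp only [kravC, Nat.add_sub_cancel, Nat.succ_sub_succ, Nat.sub_zero]
  set f : ℕ → ℤ := fun l => (-1:ℤ)^l * (if l ≤ k then ((n - m).choose (k - l) : ℤ) else 0)
    with hf
  have key : ∀ l, f (l+1) * (m.choose l : ℤ) =
      -(if k = 0 then 0 else
        (-1:ℤ)^l * (if l ≤ k-1 then ((n-m).choose (k-1-l):ℤ) else 0) * (m.choose l : ℤ)) := by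
    intro l
    rcases Nat.eq_zero_or_pos k with hk | hk
    · subst hk; simp [hf]
    · simp only [hf, if_neg (Nat.pos_iff_ne_zero.mp hk), pow_succ]
      rcases le_or_gt (l+1) k with h | h
      · rw [if_pos h, if_pos (by omega)]
        have hkl : k - (l+1) = k - 1 - l := by omega
        rw [hkl]; ring
      · rw [if_neg (by omega), if_neg (by omega)]; ring
  have h1 : ∑ l ∈ range (m + 1 + 1), f l * (((m+1).choose l : ℕ) : ℤ)
      = (∑ l ∈ range (m + 1), f (l+1) * (((m+1).choose (l+1) : ℕ) : ℤ)) + f 0 := by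
    rw [Finset.sum_range_succ']; simp
  have h2 : ∀ l, f (l+1) * (((m+1).choose (l+1) : ℕ) : ℤ)
      = f (l+1) * (m.choose l : ℤ) + f (l+1) * (m.choose (l+1) : ℤ) := by
    intro l
    rw [Nat.choose_succ_succ]
    push_cast
    ring
  have h3 : (∑ l ∈ range (m + 1), f (l+1) * (m.choose (l+1) : ℤ)) + f 0
      = ∑ l ∈ range (m + 1), f l * (m.choose l : ℤ) := by
    have := Finset.sum_range_succ' (fun l => f l * (m.choose l : ℤ)) (m+1)
    rw [Finset.sum_range_succ] at this
    simp only [Nat.choose_succ_self, Nat.cast_zero, mul_zero, add_zero, Nat.choose_zero_right,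
      Nat.cast_one, mul_one] at this
    linarith [this]
  have h4 : ∑ l ∈ range (m + 1), f (l+1) * (m.choose l : ℤ)
      = -(if k = 0 then 0 else ∑ l ∈ range (m + 1),
        (-1:ℤ)^l * (if l ≤ k-1 then ((n-m).choose (k-1-l):ℤ) else 0) * (m.choose l : ℤ)) := by
    rw [Finset.sum_congr rfl (fun l _ => key l)]
    rcases Nat.eq_zero_or_pos k with hk | hk
    · simp [hk]
    · simp only [if_neg (Nat.pos_iff_ne_zero.mp hk), Finset.sum_neg_distrib]
  calc ∑ l ∈ range (m + 1 + 1), (-1:ℤ)^l * (if l ≤ k then ((n - m).choose (k - l) : ℤ) else 0) * (((m+1).choose l : ℕ) : ℤ)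
      = ∑ l ∈ range (m + 1 + 1), f l * (((m+1).choose l : ℕ) : ℤ) := by
        refine Finset.sum_congr rfl fun l _ => ?_; rw [hf]
    _ = (∑ l ∈ range (m + 1), f (l+1) * (m.choose l : ℤ))
        + ((∑ l ∈ range (m + 1), f (l+1) * (m.choose (l+1) : ℤ)) + f 0) := by
        rw [h1, Finset.sum_congr rfl (fun l _ => h2 l), Finset.sum_add_distrib]; ring
    _ = (∑ l ∈ range (m + 1), f l * (m.choose l : ℤ))
        - (if k = 0 then 0 else ∑ l ∈ range (m + 1),
          (-1:ℤ)^l * (if l ≤ k-1 then ((n-m).choose (k-1-l):ℤ) else 0) * (m.choose l : ℤ)) := by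
        rw [h3, h4]; ring
    _ = _ := by
        refine congrArg₂ (· - ·) (Finset.sum_congr rfl fun l _ => by rw [hf]) ?_
        rcases Nat.eq_zero_or_pos k with hk | hk
        · simp [hk]
        · simp [Nat.pos_iff_ne_zero.mp hk]
end

section
/- For all natural numbers n and m ≤ n, the polynomial identity (1 - x)^m * (1 + x)^(n - m) = Σ_{k=0}^{n} C(n, k, m) * x^k holds in ℤ[x]. -/
open Finset

open Polynomial in
lemma coeff_one_sub_X_pow (m k : ℕ) :
    ((1 - X : ℤ[X]) ^ m).coeff k = (-1 : ℤ) ^ k * (m.choose k : ℤ) := by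
  have h : (1 - X : ℤ[X]) = -(X + C (-1)) := by
    simp [sub_eq_add_neg, add_comm]
  have hC : (-1 : ℤ[X]) = C (-1) := by simp
  rw [h, neg_pow, hC, ← C_pow, coeff_C_mul, coeff_X_add_C_pow]
  rcases le_or_gt k m with hk | hk
  · rw [← mul_assoc, ← pow_add, show m + (m - k) = k + 2 * (m - k) by omega,
      pow_add, pow_mul]
    norm_num
  · rw [Nat.choose_eq_zero_of_lt hk]
    push_cast
    ring

open Polynomial in
theorem kravC_generating_polynomial (n m : ℕ) (hm : m ≤ n) :
    (1 - X : ℤ[X]) ^ m * (1 + X) ^ (n - m) =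
      ∑ k ∈ Finset.range (n + 1), Polynomial.C (kravC n k m) * X ^ k := by
  ext k
  rw [Polynomial.coeff_mul, Polynomial.finset_sum_coeff]
  have hR : ∀ i ∈ Finset.range (n+1),
      (Polynomial.C (kravC n i m) * X ^ i).coeff k = if i = k then kravC n i m else 0 := by
    intro i _
    rw [Polynomial.coeff_C_mul, Polynomial.coeff_X_pow]
    by_cases h : i = k
    · subst h; simp
    · rw [if_neg (Ne.symm h), if_neg h, mul_zero]
  rw [Finset.sum_congr rfl hR, Finset.sum_ite_eq' (Finset.range (n+1)) k]
  have hL : ∑ x ∈ Finset.HasAntidiagonal.antidiagonal k,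
        ((1 - X : ℤ[X]) ^ m).coeff x.1 * ((1 + X : ℤ[X]) ^ (n - m)).coeff x.2
      = ∑ l ∈ Finset.range (k+1), (-1:ℤ)^l * (m.choose l : ℤ) * ((n-m).choose (k-l) : ℤ) := by
    rw [Finset.Nat.sum_antidiagonal_eq_sum_range_succ
      (f := fun i j => ((1 - X : ℤ[X]) ^ m).coeff i * ((1 + X : ℤ[X]) ^ (n - m)).coeff j)]
    refine Finset.sum_congr rfl fun l _ => ?_
    rw [coeff_one_sub_X_pow, Polynomial.coeff_one_add_X_pow]
  rw [hL]
  have key : ∑ l ∈ Finset.range (k+1), (-1:ℤ)^l * (m.choose l : ℤ) * ((n-m).choose (k-l) : ℤ)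
      = kravC n k m := by
    unfold kravC
    have h1 : ∑ l ∈ Finset.range (k+1), (-1:ℤ)^l * (m.choose l : ℤ) * ((n-m).choose (k-l) : ℤ)
        = ∑ l ∈ Finset.range (k+1),
            (-1:ℤ)^l * (if l ≤ k then ((n-m).choose (k-l) : ℤ) else 0) * (m.choose l : ℤ) := by
      refine Finset.sum_congr rfl fun l hl => ?_
      rw [Finset.mem_range] at hl
      rw [if_pos (by omega)]
      ring
    have h2 : ∑ l ∈ Finset.range (k+1),
            (-1:ℤ)^l * (if l ≤ k then ((n-m).choose (k-l) : ℤ) else 0) * (m.choose l : ℤ)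
        = ∑ l ∈ Finset.range (max k m + 1),
            (-1:ℤ)^l * (if l ≤ k then ((n-m).choose (k-l) : ℤ) else 0) * (m.choose l : ℤ) := by
      refine Finset.sum_subset (Finset.range_subset_range.2 (by omega)) ?_
      intro l _ hl
      rw [Finset.mem_range] at hl
      rw [if_neg (by omega)]
      ring
    have h3 : ∑ l ∈ Finset.range (m+1),
            (-1:ℤ)^l * (if l ≤ k then ((n-m).choose (k-l) : ℤ) else 0) * (m.choose l : ℤ)
        = ∑ l ∈ Finset.range (max k m + 1),
            (-1:ℤ)^l * (if l ≤ k then ((n-m).choose (k-l) : ℤ) else 0) * (m.choose l : ℤ) := by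
      refine Finset.sum_subset (Finset.range_subset_range.2 (by omega)) ?_
      intro l _ hl
      rw [Finset.mem_range] at hl
      rw [Nat.choose_eq_zero_of_lt (show m < l by omega)]
      simp
    rw [h1, h2, h3]
  rw [key]
  split_ifs with hk
  · rfl
  · rw [Finset.mem_range] at hk
    unfold kravC
    refine Finset.sum_eq_zero fun l hl => ?_
    rw [Finset.mem_range] at hl
    by_cases h : l ≤ k
    · rw [if_pos h, Nat.choose_eq_zero_of_lt (by omega)]
      simp
    · rw [if_neg h]; ring
end

section
/- For all natural numbers n ≥ 1 and 1 ≤ k ≤ n, the binomial-weighted row sum Σ_{m=0}^{n} binom(n, m) * C(n, k, m) equals 0; and for k = 0 it equals 2^n. -/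
open Finset

-- C(a,j)*C(a-j,b) = C(a,b)*C(a-b,j) for j ≤ a
lemma tri2 (a b j : ℕ) (hj : j ≤ a) :
    a.choose j * (a - j).choose b = a.choose b * (a - b).choose j := by
  by_cases h : j + b ≤ a
  · have h1 := Nat.choose_mul (n := a) (k := j + b) (s := j) (Nat.le_add_right _ _)
    have h2 := Nat.choose_mul (n := a) (k := j + b) (s := b) (Nat.le_add_left _ _)
    have hs : (j + b).choose j = (j + b).choose b := Nat.choose_symm_add
    simp only [Nat.add_sub_cancel_left, Nat.add_sub_cancel] at h1 h2
    -- h1 : a.choose (j+b) * (j+b).choose j = a.choose j * (a-j).choose b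
    -- h2 : a.choose (j+b) * (j+b).choose b = a.choose b * (a-b).choose j
    rw [← h1, ← h2, hs]
  · push_neg at h
    have e1 : (a - j).choose b = 0 := Nat.choose_eq_zero_of_lt (by omega)
    rw [e1, mul_zero]
    by_cases hb : b ≤ a
    · have e2 : (a - b).choose j = 0 := Nat.choose_eq_zero_of_lt (by omega)
      rw [e2, mul_zero]
    · rw [Nat.choose_eq_zero_of_lt (by omega : a < b), zero_mul]

lemma Tsum (n k l : ℕ) (hl : l ≤ k) (hk : k ≤ n) :
    (∑ m ∈ Finset.range (n + 1),
        (n.choose m : ℤ) * ((n - m).choose (k - l) : ℤ) * (m.choose l : ℤ))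
      = (n.choose l : ℤ) * ((n - l).choose (k - l) : ℤ) * 2 ^ (n - k) := by
  have hln : l ≤ n := hl.trans hk
  -- drop m < l terms, reindex
  rw [range_eq_Ico, ← Finset.sum_Ico_consecutive _ (Nat.zero_le l) (by omega : l ≤ n + 1)]
  have hz : (∑ m ∈ Finset.Ico 0 l,
      (n.choose m : ℤ) * ((n - m).choose (k - l) : ℤ) * (m.choose l : ℤ)) = 0 := by
    apply Finset.sum_eq_zero
    intro m hm
    simp only [Finset.mem_Ico] at hm
    rw [Nat.choose_eq_zero_of_lt hm.2]
    simp
  rw [hz, zero_add, Finset.sum_Ico_eq_sum_range]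
  have hstep : ∀ j ∈ Finset.range (n + 1 - l),
      (n.choose (l + j) : ℤ) * ((n - (l + j)).choose (k - l) : ℤ) * ((l + j).choose l : ℤ)
        = (n.choose l : ℤ) * ((n - k).choose j : ℤ) * ((n - l).choose (k - l) : ℤ) := by
    intro j hj
    simp only [Finset.mem_range] at hj
    rw [Nat.sub_add_eq]
    have hjn : l + j ≤ n := by omega
    have h1 := Nat.choose_mul (n := n) (k := l + j) (s := l) (Nat.le_add_right _ _)
    simp only [Nat.add_sub_cancel_left] at h1
    -- h1 : n.choose (l+j) * (l+j).choose l = n.choose l * (n-l).choose j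
    have h2 := tri2 (n - l) (k - l) j (by omega)
    have hab : n - l - (k - l) = n - k := by omega
    rw [hab] at h2
    have := congrArg (fun x : ℕ => (x : ℤ)) h1
    push_cast at this ⊢
    calc (n.choose (l + j) : ℤ) * ((n - l - j).choose (k - l)) * ((l + j).choose l)
        = ((n.choose (l + j) : ℤ) * ((l + j).choose l)) * ((n - l - j).choose (k - l)) := by ring
      _ = ((n.choose l : ℤ) * ((n - l).choose j)) * ((n - l - j).choose (k - l)) := by
          rw [this]
      _ = (n.choose l : ℤ) * (((n - l).choose j) * ((n - l - j).choose (k - l))) := by ring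
      _ = (n.choose l : ℤ) * (((n - l).choose (k - l)) * ((n - k).choose j)) := by
          rw_mod_cast [h2]
      _ = (n.choose l : ℤ) * ((n - k).choose j) * ((n - l).choose (k - l)) := by ring
  rw [Finset.sum_congr rfl hstep]
  have hsum : (∑ j ∈ Finset.range (n + 1 - l), ((n - k).choose j : ℤ)) = 2 ^ (n - k) := by
    rw [← Finset.sum_subset (Finset.range_subset_range.2 (by omega : n - k + 1 ≤ n + 1 - l))]
    · rw_mod_cast [Nat.sum_range_choose]
    · intro j _ hj
      simp only [Finset.mem_range] at hj
      rw [Nat.choose_eq_zero_of_lt (by omega)]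
      simp
  calc (∑ j ∈ Finset.range (n + 1 - l),
        (n.choose l : ℤ) * ((n - k).choose j) * ((n - l).choose (k - l)))
      = (n.choose l : ℤ) * ((n - l).choose (k - l)) *
          (∑ j ∈ Finset.range (n + 1 - l), ((n - k).choose j : ℤ)) := by
        rw [Finset.mul_sum]; apply Finset.sum_congr rfl; intro j _; ring
    _ = _ := by rw [hsum]

lemma Smain (n k : ℕ) (hk : k ≤ n) :
    (∑ m ∈ Finset.range (n + 1), (n.choose m : ℤ) * kravC n k m)
      = 2 ^ (n - k) * (n.choose k : ℤ) * (if k = 0 then 1 else 0) := by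
  have step1 : ∀ m ∈ Finset.range (n + 1),
      (n.choose m : ℤ) * kravC n k m
        = ∑ l ∈ Finset.range (n + 1),
            (-1 : ℤ) ^ l * (if l ≤ k then ((n - m).choose (k - l) : ℤ) else 0) *
              (m.choose l : ℤ) * (n.choose m : ℤ) := by
    intro m hm
    simp only [Finset.mem_range] at hm
    rw [kravC, Finset.mul_sum]
    rw [← Finset.sum_subset (Finset.range_subset_range.2 (by omega : m + 1 ≤ n + 1))]
    · apply Finset.sum_congr rfl; intro l _; ring
    · intro l _ hl
      simp only [Finset.mem_range] at hl
      have hz : m.choose l = 0 := Nat.choose_eq_zero_of_lt (by omega)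
      rw [hz]
      push_cast; ring
  rw [Finset.sum_congr rfl step1, Finset.sum_comm]
  have step2 : ∀ l ∈ Finset.range (n + 1),
      (∑ m ∈ Finset.range (n + 1),
          (-1 : ℤ) ^ l * (if l ≤ k then ((n - m).choose (k - l) : ℤ) else 0) *
            (m.choose l : ℤ) * (n.choose m : ℤ))
        = (if l ≤ k then (-1 : ℤ) ^ l * (n.choose k : ℤ) * (k.choose l : ℤ) * 2 ^ (n - k)
           else 0) := by
    intro l _
    by_cases hl : l ≤ k
    · simp only [hl, if_true]
      have := Tsum n k l hl hk
      calc (∑ m ∈ Finset.range (n + 1),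
              (-1 : ℤ) ^ l * ((n - m).choose (k - l) : ℤ) * (m.choose l : ℤ) * (n.choose m : ℤ))
          = (-1 : ℤ) ^ l * (∑ m ∈ Finset.range (n + 1),
              (n.choose m : ℤ) * ((n - m).choose (k - l) : ℤ) * (m.choose l : ℤ)) := by
            rw [Finset.mul_sum]; apply Finset.sum_congr rfl; intro m _; ring
        _ = (-1 : ℤ) ^ l * ((n.choose l : ℤ) * ((n - l).choose (k - l) : ℤ) * 2 ^ (n - k)) := by
            rw [this]
        _ = _ := by
            have h := Nat.choose_mul (n := n) (k := k) (s := l) hl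
            have h' := congrArg (fun x : ℕ => (x : ℤ)) h
            push_cast at h'
            rw [← h']; ring
    · simp only [hl, if_false]
      apply Finset.sum_eq_zero
      intro m _
      ring
  rw [Finset.sum_congr rfl step2]
  rw [← Finset.sum_subset (Finset.range_subset_range.2 (by omega : k + 1 ≤ n + 1))]
  · have step3 : ∀ l ∈ Finset.range (k + 1),
        (if l ≤ k then (-1 : ℤ) ^ l * (n.choose k : ℤ) * (k.choose l : ℤ) * 2 ^ (n - k) else 0)
          = 2 ^ (n - k) * (n.choose k : ℤ) * ((-1 : ℤ) ^ l * (k.choose l : ℤ)) := by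
      intro l hl
      simp only [Finset.mem_range] at hl
      rw [if_pos (by omega)]; ring
    rw [Finset.sum_congr rfl step3, ← Finset.mul_sum, Int.alternating_sum_range_choose]
  · intro l _ hl
    simp only [Finset.mem_range] at hl
    rw [if_neg (by omega)]

theorem kravC_weighted_row_sum (n : ℕ) (hn : 1 ≤ n) :
    (∀ k : ℕ, 1 ≤ k → k ≤ n →
        (∑ m ∈ Finset.range (n + 1), (n.choose m : ℤ) * kravC n k m) = 0) ∧
    (∑ m ∈ Finset.range (n + 1), (n.choose m : ℤ) * kravC n 0 m) = (2 : ℤ) ^ n := by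
  constructor
  · intro k hk1 hkn
    rw [Smain n k hkn, if_neg (by omega)]
    ring
  · rw [Smain n 0 (Nat.zero_le n), if_pos rfl]
    simp
end

section
/- For all natural numbers n ≥ 1 and m ≤ n, the sum Σ_{k=0}^{n} k * C(n, k, m) equals n * 2^(n-1) if m = 0, equals -2^(n-1) if m = 1, and equals 0 if 2 ≤ m ≤ n. -/
open Finset

lemma chooseCast (M j : ℕ) : ((M+1).choose (j+1) : ℤ) * ((j:ℤ)+1) = ((M:ℤ)+1) * (M.choose j : ℤ) := by
  have := (Nat.add_one_mul_choose_eq M j).symm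
  exact_mod_cast congrArg (Nat.cast : ℕ → ℤ) this

lemma sumA (N : ℕ) : ∑ k ∈ Finset.range (N + 1), (k : ℤ) * (N.choose k : ℤ)
    = (N : ℤ) * 2 ^ (N - 1) := by
  cases N with
  | zero => simp
  | succ M =>
    rw [Finset.sum_range_succ' (fun k => (k : ℤ) * ((M+1).choose k : ℤ))]
    simp only [Nat.cast_zero, zero_mul, add_zero, Nat.cast_add, Nat.cast_one]
    calc (∑ j ∈ Finset.range (M+1), ((j:ℤ)+1) * ((M+1).choose (j+1) : ℤ))
        = ∑ j ∈ Finset.range (M+1), ((M:ℤ)+1) * (M.choose j : ℤ) := by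
          apply Finset.sum_congr rfl; intro j _
          rw [mul_comm, chooseCast]
      _ = ((M:ℤ)+1) * 2 ^ M := by
          rw [← Finset.mul_sum]
          congr 1
          exact_mod_cast congrArg (Nat.cast : ℕ → ℤ) (Nat.sum_range_choose M)
      _ = ((M:ℤ)+1) * 2 ^ ((M+1) - 1) := by norm_num

lemma sumC (m : ℕ) : ∑ l ∈ Finset.range (m + 1), (l : ℤ) * ((-1)^l * (m.choose l : ℤ))
    = if m = 1 then -1 else 0 := by
  cases m with
  | zero => simp
  | succ M =>
    rw [Finset.sum_range_succ' (fun l => (l : ℤ) * ((-1)^l * ((M+1).choose l : ℤ)))]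
    simp only [Nat.cast_zero, zero_mul, add_zero, Nat.cast_add, Nat.cast_one]
    calc (∑ j ∈ Finset.range (M+1), ((j:ℤ)+1) * ((-1)^(j+1) * ((M+1).choose (j+1) : ℤ)))
        = ∑ j ∈ Finset.range (M+1), (-((M:ℤ)+1)) * ((-1)^j * (M.choose j : ℤ)) := by
          apply Finset.sum_congr rfl; intro j _
          calc ((j:ℤ)+1) * ((-1)^(j+1) * ((M+1).choose (j+1) : ℤ))
              = (-(-1:ℤ)^j) * (((M+1).choose (j+1) : ℤ) * ((j:ℤ)+1)) := by ring
            _ = (-(-1:ℤ)^j) * (((M:ℤ)+1) * (M.choose j : ℤ)) := by rw [chooseCast]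
            _ = (-((M:ℤ)+1)) * ((-1)^j * (M.choose j : ℤ)) := by ring
      _ = (-((M:ℤ)+1)) * (if M = 0 then 1 else 0) := by
          rw [← Finset.mul_sum, Int.alternating_sum_range_choose]
      _ = if M + 1 = 1 then -1 else 0 := by
          rcases Nat.eq_zero_or_pos M with h | h
          · subst h; norm_num
          · rw [if_neg (by omega), if_neg (by omega), mul_zero]

lemma innerSum (n m l : ℕ) (hm : m ≤ n) (hl : l ≤ m) :
    ∑ k ∈ Finset.range (n+1), (k:ℤ) * (if l ≤ k then ((n-m).choose (k-l) : ℤ) else 0)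
    = ((n-m : ℕ):ℤ) * 2^(n-m-1) + (l:ℤ) * 2^(n-m) := by
  rw [Finset.range_eq_Ico,
    ← Finset.sum_Ico_consecutive (fun k => (k:ℤ) * (if l ≤ k then ((n-m).choose (k-l) : ℤ) else 0))
      (Nat.zero_le l) (by omega : l ≤ n+1)]
  have h1 : ∑ k ∈ Finset.Ico 0 l, (k:ℤ) * (if l ≤ k then ((n-m).choose (k-l) : ℤ) else 0) = 0 := by
    apply Finset.sum_eq_zero
    intro k hk
    rw [Finset.mem_Ico] at hk
    rw [if_neg (by omega), mul_zero]
  rw [h1, zero_add, Finset.sum_Ico_eq_sum_range]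
  have h2 : ∀ j, ((l+j : ℕ):ℤ) * (if l ≤ l+j then ((n-m).choose (l+j-l) : ℤ) else 0)
      = ((l:ℤ)+(j:ℤ)) * ((n-m).choose j : ℤ) := by
    intro j
    rw [if_pos (Nat.le_add_right l j), show l + j - l = j by omega]
    push_cast
    ring
  simp only [h2]
  rw [← Finset.sum_subset (Finset.range_subset_range.mpr (by omega : n-m+1 ≤ n+1-l))]
  · calc ∑ j ∈ Finset.range (n-m+1), ((l:ℤ)+(j:ℤ)) * ((n-m).choose j : ℤ)
        = (∑ j ∈ Finset.range (n-m+1), (l:ℤ) * ((n-m).choose j : ℤ))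
          + ∑ j ∈ Finset.range (n-m+1), (j:ℤ) * ((n-m).choose j : ℤ) := by
          rw [← Finset.sum_add_distrib]; apply Finset.sum_congr rfl; intro j _; ring
      _ = (l:ℤ) * 2^(n-m) + ((n-m:ℕ):ℤ) * 2^(n-m-1) := by
          rw [sumA, ← Finset.mul_sum]
          congr 1
          congr 1
          exact_mod_cast congrArg (Nat.cast : ℕ → ℤ) (Nat.sum_range_choose (n-m))
      _ = ((n-m : ℕ):ℤ) * 2^(n-m-1) + (l:ℤ) * 2^(n-m) := by ring
  · intro j hj hj2
    rw [Finset.mem_range] at hj hj2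
    rw [Nat.choose_eq_zero_of_lt (by omega), Nat.cast_zero, mul_zero]

theorem kravC_sum_with_number_operator (n m : ℕ) (hn : 1 ≤ n) (hm : m ≤ n) :
    (∑ k ∈ Finset.range (n + 1), (k : ℤ) * kravC n k m) =
      if m = 0 then (n : ℤ) * 2 ^ (n - 1)
      else if m = 1 then -(2 : ℤ) ^ (n - 1)
      else 0 := by
  have key : (∑ k ∈ Finset.range (n + 1), (k : ℤ) * kravC n k m)
      = ∑ l ∈ Finset.range (m + 1), ((-1:ℤ)^l * (m.choose l : ℤ))
          * (((n-m : ℕ):ℤ) * 2^(n-m-1) + (l:ℤ) * 2^(n-m)) := by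
    simp only [kravC, Finset.mul_sum]
    rw [Finset.sum_comm]
    apply Finset.sum_congr rfl
    intro l hl
    rw [Finset.mem_range] at hl
    rw [← innerSum n m l hm (by omega), Finset.mul_sum]
    apply Finset.sum_congr rfl
    intro k _
    ring
  rw [key]
  have expand : ∑ l ∈ Finset.range (m + 1), ((-1:ℤ)^l * (m.choose l : ℤ))
          * (((n-m : ℕ):ℤ) * 2^(n-m-1) + (l:ℤ) * 2^(n-m))
      = ((n-m : ℕ):ℤ) * 2^(n-m-1) * (∑ l ∈ Finset.range (m+1), (-1:ℤ)^l * (m.choose l : ℤ))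
        + 2^(n-m) * (∑ l ∈ Finset.range (m+1), (l:ℤ) * ((-1)^l * (m.choose l : ℤ))) := by
    rw [Finset.mul_sum, Finset.mul_sum, ← Finset.sum_add_distrib]
    apply Finset.sum_congr rfl
    intro l _
    ring
  rw [expand, Int.alternating_sum_range_choose, sumC]
  rcases Nat.eq_zero_or_pos m with h0 | h0
  · subst h0; simp
  rcases Nat.lt_or_ge m 2 with h1 | h1
  · have : m = 1 := by omega
    subst this
    simp
  · rw [if_neg (by omega), if_neg (by omega), if_neg (by omega), if_neg (by omega)]
    ring
end

section
/- For every function f : Fin n → Bool (a computational basis string), the evaluation Σ_{S ⊆ Fin n} C(n, k, |S|) * Π_{i ∈ S} (-1)^(if f i then 1 else 0) equals 2^n if the Hamming weight of f equals k, and equals 0 otherwise. -/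
open Finset

lemma fiber_card (n k : ℕ) (S A : Finset (Fin n)) (hA : A ⊆ S) (hlk : A.card ≤ k) :
    ((Finset.powersetCard k (Finset.univ : Finset (Fin n))).filter
        (fun T => T ∩ S = A)).card = (n - S.card).choose (k - A.card) := by
  have : ((Finset.powersetCard k (Finset.univ : Finset (Fin n))).filter
        (fun T => T ∩ S = A)).card = (Finset.powersetCard (k - A.card) Sᶜ).card := by
    apply Finset.card_bij' (fun T _ => T \ S) (fun B _ => A ∪ B)
    · intro T hT
      simp only [Finset.mem_filter, Finset.mem_powersetCard] at hT
      obtain ⟨⟨_, hcard⟩, hTS⟩ := hT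
      rw [Finset.mem_powersetCard]
      constructor
      · intro x hx; simp only [Finset.mem_sdiff] at hx; simp [hx.2]
      · have : (T ∩ S).card + (T \ S).card = T.card := by
          rw [Finset.card_inter_add_card_sdiff]
        rw [hTS] at this
        omega
    · intro B hB
      rw [Finset.mem_powersetCard] at hB
      simp only [Finset.mem_filter, Finset.mem_powersetCard]
      have hdisj : Disjoint A B := by
        apply Finset.disjoint_left.mpr
        intro x hxA hxB
        exact absurd (hA hxA) (Finset.mem_compl.mp (hB.1 hxB))
      refine ⟨⟨Finset.subset_univ _, ?_⟩, ?_⟩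
      · rw [Finset.card_union_of_disjoint hdisj, hB.2]; omega
      · rw [Finset.union_inter_distrib_right]
        have : B ∩ S = ∅ := by
          apply Finset.eq_empty_of_forall_notMem
          intro x hx
          simp only [Finset.mem_inter] at hx
          exact absurd hx.2 (Finset.mem_compl.mp (hB.1 hx.1))
        rw [this, Finset.inter_eq_left.mpr hA, Finset.union_empty]
    · intro T hT
      simp only [Finset.mem_filter] at hT
      ext x
      simp only [Finset.mem_union, Finset.mem_sdiff, ← hT.2, Finset.mem_inter]
      tauto
    · intro B hB
      rw [Finset.mem_powersetCard] at hB
      rw [Finset.union_sdiff_distrib]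
      have h1 : A \ S = ∅ := Finset.sdiff_eq_empty_iff_subset.mpr hA
      have h2 : B \ S = B := by
        apply Finset.sdiff_eq_self_of_disjoint
        apply Finset.disjoint_left.mpr
        intro x hx; exact fun hxS => (Finset.mem_compl.mp (hB.1 hx)) hxS
      rw [h1, h2, Finset.empty_union]
  rw [this, Finset.card_powersetCard, Finset.card_compl, Fintype.card_fin]

lemma kravC_eq_sum (n k : ℕ) (S : Finset (Fin n)) :
    kravC n k S.card =
      ∑ T ∈ Finset.powersetCard k (Finset.univ : Finset (Fin n)),
        (-1 : ℤ) ^ (S ∩ T).card := by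
  rw [← Finset.sum_fiberwise_of_maps_to (g := fun T => T ∩ S) (t := S.powerset)
      (fun T _ => Finset.mem_powerset.mpr (Finset.inter_subset_right))
      (fun T => (-1 : ℤ) ^ (S ∩ T).card)]
  rw [Finset.sum_powerset]
  unfold kravC
  apply Finset.sum_congr rfl
  intro l hl
  rw [Finset.mem_range] at hl
  have hsum : ∀ A ∈ Finset.powersetCard l S,
      (∑ T ∈ (Finset.powersetCard k (Finset.univ : Finset (Fin n))).filter
          (fun T => T ∩ S = A), (-1 : ℤ) ^ (S ∩ T).card)
        = (-1 : ℤ) ^ l * (if l ≤ k then ((n - S.card).choose (k - l) : ℤ) else 0) := by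
    intro A hA
    rw [Finset.mem_powersetCard] at hA
    have step : ∀ T ∈ (Finset.powersetCard k (Finset.univ : Finset (Fin n))).filter
          (fun T => T ∩ S = A), (-1 : ℤ) ^ (S ∩ T).card = (-1 : ℤ) ^ l := by
      intro T hT
      rw [Finset.mem_filter] at hT
      rw [Finset.inter_comm, hT.2, hA.2]
    rw [Finset.sum_congr rfl step, Finset.sum_const, nsmul_eq_mul]
    by_cases hlk : l ≤ k
    · rw [fiber_card n k S A hA.1 (hA.2 ▸ hlk), if_pos hlk, hA.2]
      ring
    · rw [if_neg hlk]
      have : (Finset.powersetCard k (Finset.univ : Finset (Fin n))).filter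
          (fun T => T ∩ S = A) = ∅ := by
        apply Finset.eq_empty_of_forall_notMem
        intro T hT
        rw [Finset.mem_filter, Finset.mem_powersetCard] at hT
        have : A.card ≤ T.card := hT.2 ▸ Finset.card_le_card Finset.inter_subset_left
        omega
      rw [this]; simp
  rw [Finset.sum_congr rfl hsum, Finset.sum_const, Finset.card_powersetCard, nsmul_eq_mul]
  ring

lemma sum_over_subsets (n : ℕ) (g : Fin n → ℤ) :
    ∑ S : Finset (Fin n), ∏ i ∈ S, g i = ∏ i : Fin n, (1 + g i) := by
  have h := Finset.prod_add g (fun _ => (1 : ℤ)) (Finset.univ : Finset (Fin n))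
  simp only [Finset.prod_const_one, mul_one] at h
  rw [← Finset.powerset_univ,
    show (∏ i : Fin n, (1 + g i)) = ∏ i : Fin n, (g i + 1) from
      Finset.prod_congr rfl fun _ _ => add_comm _ _]
  exact h.symm

theorem kravC_pauli_decomposition_eval (n k : ℕ) (f : Fin n → Bool) :
    (∑ S : Finset (Fin n),
        kravC n k S.card * ∏ i ∈ S, (-1 : ℤ) ^ (if f i then 1 else 0)) =
      if (Finset.univ.filter fun i => f i = true).card = k then (2 : ℤ) ^ n else 0 := by
  set F : Finset (Fin n) := Finset.univ.filter fun i => f i = true with hF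
  have key : ∀ S : Finset (Fin n),
      (∏ i ∈ S, (-1 : ℤ) ^ (if f i then 1 else 0)) = (-1 : ℤ) ^ (S ∩ F).card := by
    intro S
    have h2 : (-1 : ℤ) ^ (S ∩ F).card = ∏ i ∈ S, (if i ∈ F then (-1 : ℤ) else 1) := by
      rw [Finset.prod_ite_mem, Finset.prod_const]
    rw [h2]
    apply Finset.prod_congr rfl
    intro i _
    by_cases h : f i <;> simp [hF, h]
  calc (∑ S : Finset (Fin n),
        kravC n k S.card * ∏ i ∈ S, (-1 : ℤ) ^ (if f i then 1 else 0))
      = ∑ S : Finset (Fin n),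
          ∑ T ∈ Finset.powersetCard k (Finset.univ : Finset (Fin n)),
            (-1 : ℤ) ^ (S ∩ T).card * (-1 : ℤ) ^ (S ∩ F).card := by
        apply Finset.sum_congr rfl
        intro S _
        rw [key S, kravC_eq_sum, Finset.sum_mul]
    _ = ∑ T ∈ Finset.powersetCard k (Finset.univ : Finset (Fin n)),
          ∑ S : Finset (Fin n), ∏ i ∈ S,
            ((if i ∈ T then (-1 : ℤ) else 1) * (if i ∈ F then (-1 : ℤ) else 1)) := by
        rw [Finset.sum_comm]
        apply Finset.sum_congr rfl
        intro T _
        apply Finset.sum_congr rfl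
        intro S _
        rw [Finset.prod_mul_distrib, Finset.prod_ite_mem, Finset.prod_ite_mem,
          Finset.prod_const, Finset.prod_const]
    _ = ∑ T ∈ Finset.powersetCard k (Finset.univ : Finset (Fin n)),
          ∏ i : Fin n, (1 + (if i ∈ T then (-1 : ℤ) else 1) * (if i ∈ F then (-1 : ℤ) else 1)) := by
        apply Finset.sum_congr rfl
        intro T _
        exact sum_over_subsets n _
    _ = ∑ T ∈ Finset.powersetCard k (Finset.univ : Finset (Fin n)),
          (if T = F then (2 : ℤ) ^ n else 0) := by
        apply Finset.sum_congr rfl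
        intro T _
        by_cases hTF : T = F
        · rw [if_pos hTF, hTF]
          have h2 : ∀ i ∈ (Finset.univ : Finset (Fin n)),
              (1 + (if i ∈ F then (-1 : ℤ) else 1) * (if i ∈ F then (-1 : ℤ) else 1)) = 2 := by
            intro i _; by_cases h : i ∈ F <;> simp [h]
          rw [Finset.prod_congr rfl h2, Finset.prod_const, Finset.card_univ, Fintype.card_fin]
        · rw [if_neg hTF]
          have : ∃ i, (i ∈ T ∧ i ∉ F) ∨ (i ∉ T ∧ i ∈ F) := by
            by_contra hc
            push_neg at hc
            apply hTF
            ext i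
            have := hc i
            tauto
          obtain ⟨i, hi⟩ := this
          apply Finset.prod_eq_zero (Finset.mem_univ i)
          rcases hi with ⟨h1, h2⟩ | ⟨h1, h2⟩ <;> simp [h1, h2]
    _ = if F.card = k then (2 : ℤ) ^ n else 0 := by
        rw [Finset.sum_ite_eq' (Finset.powersetCard k Finset.univ) F (fun _ => (2 : ℤ) ^ n)]
        simp [Finset.mem_powersetCard_univ]
end

section
/- For all natural numbers n, k ≤ n, and m ≤ n, the symmetry relation C(n, n - k, m) = (-1)^m * C(n, k, m) holds. -/
open Finset

theorem kravC_symmetry (n k m : ℕ) (hk : k ≤ n) (hm : m ≤ n) :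
    kravC n (n - k) m = (-1 : ℤ) ^ m * kravC n k m := by
  unfold kravC
  rw [Finset.mul_sum]
  rw [← Finset.sum_range_reflect
    (fun l => (-1:ℤ)^m * ((-1 : ℤ) ^ l * (if l ≤ k then ((n - m).choose (k - l) : ℤ) else 0) * (m.choose l : ℤ))) (m+1)]
  apply Finset.sum_congr rfl
  intro l hl
  simp only [Finset.mem_range] at hl
  have hlm : l ≤ m := by omega
  simp only [Nat.add_sub_cancel]
  have hsign : ((-1:ℤ)^m * (-1)^(m - l)) = (-1)^l := by
    have : (-1:ℤ)^(m-l) * (-1:ℤ)^l = (-1)^m := by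
      rw [← pow_add]; congr 1; omega
    have h2 : ((-1:ℤ)^(m-l))^2 = 1 := by
      rw [← pow_mul, pow_mul']; simp
    calc ((-1:ℤ)^m * (-1)^(m - l)) = ((-1:ℤ)^(m-l) * (-1)^l) * (-1)^(m-l) := by rw [this]
    _ = ((-1:ℤ)^(m-l))^2 * (-1)^l := by ring
    _ = (-1:ℤ)^l := by rw [h2]; ring
  have hch : (m.choose (m - l) : ℤ) = (m.choose l : ℤ) := by
    rw [Nat.choose_symm hlm]
  have key : (if l ≤ n - k then ((n - m).choose (n - k - l) : ℤ) else 0)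
      = (if m - l ≤ k then ((n - m).choose (k - (m - l)) : ℤ) else 0) := by
    by_cases h1 : l ≤ n - k
    · by_cases h2 : m - l ≤ k
      · rw [if_pos h1, if_pos h2]
        by_cases h3 : n - k - l ≤ n - m
        · rw [← Nat.choose_symm h3]
          have he : n - m - (n - k - l) = k - (m - l) := by omega
          rw [he]
        · -- n - k - l > n - m, so k + l > ... m - l > k contradiction? check
          -- h3 false means n - k - l > n - m, i.e. m > k + l, i.e. m - l > k, contra h2
          omega
      · rw [if_pos h1, if_neg h2]
        -- m - l > k means m > k + l, so n - k - l > n - m, choose = 0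
        have : n - m < n - k - l := by omega
        rw [Nat.choose_eq_zero_of_lt this]
        simp
    · rw [if_neg h1]
      by_cases h2 : m - l ≤ k
      · rw [if_pos h2]
        -- l > n - k means k + l > n, so k - (m-l) = k + l - m > n - m
        have : n - m < k - (m - l) := by omega
        rw [Nat.choose_eq_zero_of_lt this]
        simp
      · rw [if_neg h2]
  calc (-1:ℤ)^l * (if l ≤ n - k then ((n - m).choose (n - k - l) : ℤ) else 0) * (m.choose l : ℤ)
      = (-1:ℤ)^l * (if m - l ≤ k then ((n - m).choose (k - (m - l)) : ℤ) else 0) * (m.choose l : ℤ) := by rw [key]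
    _ = ((-1:ℤ)^m * (-1)^(m - l)) * (if m - l ≤ k then ((n - m).choose (k - (m - l)) : ℤ) else 0) * (m.choose (m - l) : ℤ) := by
        rw [hsign, hch]
    _ = (-1:ℤ)^m * ((-1 : ℤ) ^ (m - l) * (if m - l ≤ k then ((n - m).choose (k - (m - l)) : ℤ) else 0) * (m.choose (m - l) : ℤ)) := by ring
end

section
/- For all natural numbers n, k ≤ n, and m ≤ n, the duality relation binom(n, m) * C(n, k, m) = binom(n, k) * C(n, m, k) holds. -/
open Finset

lemma krav_aux (N a b : ℕ) : N.choose a * (N - a).choose b = N.choose b * (N - b).choose a := by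
  by_cases h : a + b ≤ N
  · have h1 := Nat.choose_mul (n := N) (Nat.le_add_right a b)
    have h2 := Nat.choose_mul (n := N) (Nat.le_add_left b a)
    simp only [Nat.add_sub_cancel_left, Nat.add_sub_cancel] at h1 h2
    rw [← h1, ← h2, Nat.choose_symm_add]
  · have z1 : N.choose a * (N - a).choose b = 0 := by
      rcases le_or_gt a N with ha | ha
      · have : N - a < b := by omega
        rw [Nat.choose_eq_zero_of_lt this, mul_zero]
      · rw [Nat.choose_eq_zero_of_lt ha, zero_mul]
    have z2 : N.choose b * (N - b).choose a = 0 := by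
      rcases le_or_gt b N with hb | hb
      · have : N - b < a := by omega
        rw [Nat.choose_eq_zero_of_lt this, mul_zero]
      · rw [Nat.choose_eq_zero_of_lt hb, zero_mul]
    rw [z1, z2]

lemma krav_key {n k m l : ℕ} (hk : k ≤ n) (hm : m ≤ n) (hlm : l ≤ m) (hlk : l ≤ k) :
    n.choose m * (m.choose l * (n - m).choose (k - l)) =
      n.choose k * (k.choose l * (n - k).choose (m - l)) := by
  have e1 : n.choose m * m.choose l = n.choose l * (n - l).choose (m - l) :=
    Nat.choose_mul hlm
  have e2 : n.choose k * k.choose l = n.choose l * (n - l).choose (k - l) :=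
    Nat.choose_mul hlk
  have s1 : (n - l) - (m - l) = n - m := by omega
  have s2 : (n - l) - (k - l) = n - k := by omega
  have e3 := krav_aux (n - l) (m - l) (k - l)
  rw [s1, s2] at e3
  rw [← mul_assoc, e1, mul_assoc, e3, ← mul_assoc, ← e2, mul_assoc]

theorem kravC_duality (n k m : ℕ) (hk : k ≤ n) (hm : m ≤ n) :
    (n.choose m : ℤ) * kravC n k m = (n.choose k : ℤ) * kravC n m k := by
  unfold kravC
  rw [Finset.mul_sum, Finset.mul_sum]
  rw [Finset.sum_subset (Finset.range_subset_range.2 (Nat.add_le_add_right hm 1))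
      (fun x _ hx => by
        have : m < x := by simpa using hx
        simp [Nat.choose_eq_zero_of_lt this]),
    Finset.sum_subset (Finset.range_subset_range.2 (Nat.add_le_add_right hk 1))
      (fun x _ hx => by
        have : k < x := by simpa using hx
        simp [Nat.choose_eq_zero_of_lt this])]
  refine Finset.sum_congr rfl fun l _ => ?_
  by_cases hlk : l ≤ k <;> by_cases hlm : l ≤ m
  · simp only [if_pos hlk, if_pos hlm]
    have h2 : ((n.choose m : ℤ)) * ((m.choose l : ℤ) * ((n - m).choose (k - l) : ℤ)) =
        (n.choose k : ℤ) * ((k.choose l : ℤ) * ((n - k).choose (m - l) : ℤ)) := by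
      exact_mod_cast krav_key hk hm hlm hlk
    linear_combination ((-1 : ℤ) ^ l) * h2
  · simp [hlk, hlm, Nat.choose_eq_zero_of_lt (not_le.1 hlm)]
  · simp [hlk, hlm, Nat.choose_eq_zero_of_lt (not_le.1 hlk)]
  · simp [hlk, hlm, Nat.choose_eq_zero_of_lt (not_le.1 hlm),
      Nat.choose_eq_zero_of_lt (not_le.1 hlk)]
end
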